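/- For integers 1 ≤ n_1 ≤ n_2 define P_{(n_1,n_2)}(t) = ∑_{i=1}^{n_1} i(t^{4i−2}+t^{4i−4}) + ∑_{i=2n_1}^{n_1+n_2−1} (2n_1+1)t^{2i} + ∑_{i=n_1+n_2}^{2n_1+n_2−1} 4(2n_1+n_2−i)t^{2i} + t^{4n_1+2n_2} ∈ ℤ[t]. Then in the formal power series ring ℤ[t][[T_1, T_2]] (where each of the series 1−T_2, 1−T_1T_2, 1−t²T_2, 1−t⁴T_1T_2, 1−t⁶T_1T_2 has constant term 1 and is hence invertible) one has: ∑_{n_2=1}^{∞} ∑_{n_1=1}^{n_2} P_{(n_1,n_2)}(t)·T_1^{n_1}T_2^{n_2} = (t²+1)T_1T_2 · [(1−T_2)(1−T_1T_2)(1−t⁴T_1T_2)²]^{−1} + t⁴T_1T_2²(3−t⁴T_1T_2) · [(1−T_2)(1−t²T_2)(1−t⁴T_1T_2)²]^{−1} + 4t⁴T_1T_2 · [(1−t²T_2)(1−t⁴T_1T_2)²(1−t⁶T_1T_2)]^{−1} + t⁶T_1T_2 · [(1−t²T_2)(1−t⁶T_1T_2)]^{−1}. -/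

import Mathlib

open Finset

/-- The Poincaré polynomial `P_{(n₁,n₂)}(t)` of the fundamental domain `F_γ` for `GL₃`
with root valuation `(n₁, n₂)`, `n₁ ≤ n₂`. -/
noncomputable def gl3PoincarePoly (n₁ n₂ : ℕ) : Polynomial ℤ :=
  ∑ i ∈ Icc 1 n₁, (i : Polynomial ℤ) *
      (Polynomial.X ^ (4 * i - 2) + Polynomial.X ^ (4 * i - 4))
  + ∑ i ∈ Icc (2 * n₁) (n₁ + n₂ - 1),
      ((2 * n₁ + 1 : ℕ) : Polynomial ℤ) * Polynomial.X ^ (2 * i)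
  + ∑ i ∈ Icc (n₁ + n₂) (2 * n₁ + n₂ - 1),
      ((4 * (2 * n₁ + n₂ - i) : ℕ) : Polynomial ℤ) * Polynomial.X ^ (2 * i)
  + Polynomial.X ^ (4 * n₁ + 2 * n₂)

/-- The constant `t`-polynomial viewed in `ℤ[t][[T₁, T₂]]`. -/
noncomputable def gl3C (p : Polynomial ℤ) : MvPowerSeries (Fin 2) (Polynomial ℤ) :=
  MvPowerSeries.C (σ := Fin 2) (R := Polynomial ℤ) p

/-- The variable `T₁` of `ℤ[t][[T₁, T₂]]`. -/
noncomputable def gl3T₁ : MvPowerSeries (Fin 2) (Polynomial ℤ) := MvPowerSeries.X 0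

/-- The variable `T₂` of `ℤ[t][[T₁, T₂]]`. -/
noncomputable def gl3T₂ : MvPowerSeries (Fin 2) (Polynomial ℤ) := MvPowerSeries.X 1

namespace GL3Aux

open Polynomial

noncomputable section

abbrev R := Polynomial ℤ
abbrev Ser := MvPowerSeries (Fin 2) R

/-! ### Basic infrastructure: monomials and series given by coefficient functions -/

def mon (a b : ℕ) (c : R) : Ser :=
  MvPowerSeries.monomial (R := R) (Finsupp.single 0 a + Finsupp.single 1 b) c

def mk2 (f : ℕ → ℕ → R) : Ser := fun e => f (e 0) (e 1)

lemma coeff_mk2 (f : ℕ → ℕ → R) (e : Fin 2 →₀ ℕ) :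
    MvPowerSeries.coeff (R := R) e (mk2 f) = f (e 0) (e 1) := rfl

@[simp] lemma app0 (a b : ℕ) :
    ((Finsupp.single 0 a + Finsupp.single 1 b : Fin 2 →₀ ℕ)) 0 = a := by
  simp [Finsupp.single_apply]

@[simp] lemma app1 (a b : ℕ) :
    ((Finsupp.single 0 a + Finsupp.single 1 b : Fin 2 →₀ ℕ)) 1 = b := by
  simp [Finsupp.single_apply]

lemma le2 (a b : ℕ) (e : Fin 2 →₀ ℕ) :
    Finsupp.single 0 a + Finsupp.single 1 b ≤ e ↔ a ≤ e 0 ∧ b ≤ e 1 := by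
  rw [Finsupp.le_iff' _ _ (Finset.subset_univ _)]
  constructor
  · intro h
    exact ⟨by simpa using h 0 (Finset.mem_univ _), by simpa using h 1 (Finset.mem_univ _)⟩
  · rintro ⟨h0, h1⟩ i _
    fin_cases i
    · simpa using h0
    · simpa using h1

lemma eq2 (a b : ℕ) (e : Fin 2 →₀ ℕ) :
    e = Finsupp.single 0 a + Finsupp.single 1 b ↔ e 0 = a ∧ e 1 = b := by
  constructor
  · rintro rfl; simp
  · rintro ⟨h0, h1⟩
    ext i
    fin_cases i
    · simpa using h0
    · simpa using h1

lemma one_sub_mon_mul (a b : ℕ) (c : R) (f : ℕ → ℕ → R) :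
    (1 - mon a b c) * mk2 f
      = mk2 fun m n => f m n - if a ≤ m ∧ b ≤ n then c * f (m - a) (n - b) else 0 := by
  apply MvPowerSeries.ext; intro e
  rw [sub_mul, one_mul, map_sub, coeff_mk2, coeff_mk2, mon,
    MvPowerSeries.coeff_monomial_mul]
  congr 1
  by_cases h : a ≤ e 0 ∧ b ≤ e 1
  · rw [if_pos ((le2 a b e).mpr h), if_pos h, coeff_mk2,
      Finsupp.tsub_apply, Finsupp.tsub_apply, app0, app1]
  · rw [if_neg (fun hh => h ((le2 a b e).mp hh)), if_neg h]

lemma mk2_congr {f g : ℕ → ℕ → R} (h : ∀ m n, f m n = g m n) : mk2 f = mk2 g := by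
  apply MvPowerSeries.ext; intro e
  rw [coeff_mk2, coeff_mk2, h]

lemma mk2_eq_mon (a b : ℕ) (c : R) (f : ℕ → ℕ → R)
    (h : ∀ m n, f m n = if m = a ∧ n = b then c else 0) : mk2 f = mon a b c := by
  apply MvPowerSeries.ext; intro e
  rw [coeff_mk2, h, mon, MvPowerSeries.coeff_monomial]
  by_cases he : e 0 = a ∧ e 1 = b
  · rw [if_pos he, if_pos ((eq2 a b e).mpr he)]
  · rw [if_neg he, if_neg (fun hh => he ((eq2 a b e).mp hh))]

lemma mk2_eq_mon2 (a b a' b' : ℕ) (c c' : R) (f : ℕ → ℕ → R)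
    (hne : ¬(a = a' ∧ b = b'))
    (h : ∀ m n, f m n = if m = a ∧ n = b then c else if m = a' ∧ n = b' then c' else 0) :
    mk2 f = mon a b c + mon a' b' c' := by
  apply MvPowerSeries.ext; intro e
  rw [map_add, coeff_mk2, h, mon, mon, MvPowerSeries.coeff_monomial,
    MvPowerSeries.coeff_monomial]
  by_cases h1 : e 0 = a ∧ e 1 = b
  · rw [if_pos h1, if_pos ((eq2 a b e).mpr h1),
      if_neg (fun hh => hne ⟨h1.1.symm.trans ((eq2 a' b' e).mp hh).1,
        h1.2.symm.trans ((eq2 a' b' e).mp hh).2⟩),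
      add_zero]
  · by_cases h2 : e 0 = a' ∧ e 1 = b'
    · rw [if_neg h1, if_pos h2, if_neg (fun hh => h1 ((eq2 a b e).mp hh)),
        if_pos ((eq2 a' b' e).mpr h2), zero_add]
    · rw [if_neg h1, if_neg h2, if_neg (fun hh => h1 ((eq2 a b e).mp hh)),
        if_neg (fun hh => h2 ((eq2 a' b' e).mp hh)), add_zero]

lemma mon_mul (a b a' b' : ℕ) (c c' : R) :
    mon a b c * mon a' b' c' = mon (a + a') (b + b') (c * c') := by
  rw [mon, mon, mon, MvPowerSeries.monomial_mul_monomial]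
  congr 1
  rw [Finsupp.single_add, Finsupp.single_add]
  abel_nf

lemma mon00 (c : R) : mon 0 0 c = MvPowerSeries.C (σ := Fin 2) (R := R) c := by
  rw [mon, show (Finsupp.single (0 : Fin 2) 0 + Finsupp.single 1 0) = 0 by simp]
  exact MvPowerSeries.monomial_zero_eq_C_apply c

lemma mC (p : R) : gl3C p = mon 0 0 p := (mon00 p).symm

lemma mT1 : gl3T₁ = mon 1 0 1 := by
  rw [gl3T₁, MvPowerSeries.X_def, mon]
  congr 1
  simp

lemma mT2 : gl3T₂ = mon 0 1 1 := by
  rw [gl3T₂, MvPowerSeries.X_def, mon]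
  congr 1
  simp

lemma mT12 : gl3T₁ * gl3T₂ = mon 1 1 1 := by
  rw [mT1, mT2, mon_mul]; norm_num

lemma mCT12 (p : R) : gl3C p * gl3T₁ * gl3T₂ = mon 1 1 p := by
  rw [mC, mT1, mT2, mon_mul, mon_mul]; norm_num

lemma mCT2 (p : R) : gl3C p * gl3T₂ = mon 0 1 p := by
  rw [mC, mT2, mon_mul]; norm_num

lemma num3 : (3 : Ser) = mon 0 0 3 := by
  rw [mon00]; exact (map_ofNat (MvPowerSeries.C (σ := Fin 2) (R := R)) 3).symm

lemma num4 : (4 : Ser) = mon 0 0 4 := by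
  rw [mon00]; exact (map_ofNat (MvPowerSeries.C (σ := Fin 2) (R := R)) 4).symm

lemma mon_neg (a b : ℕ) (c : R) : mon a b (-c) = - mon a b c :=
  map_neg (MvPowerSeries.monomial (R := R) _) c

lemma eq_num_mul_inv (D N S : Ser)
    (hD : MvPowerSeries.constantCoeff (σ := Fin 2) (R := R) D = 1)
    (h : D * S = N) : N * MvPowerSeries.invOfUnit D 1 = S := by
  have hu : D * MvPowerSeries.invOfUnit D 1 = 1 :=
    MvPowerSeries.mul_invOfUnit D 1 (by simpa using hD)
  calc N * MvPowerSeries.invOfUnit D 1 = S * (D * MvPowerSeries.invOfUnit D 1) := by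
        rw [← h]; ring
    _ = S := by rw [hu, mul_one]

/-! ### Interval sum helpers -/

lemma Icc_bot (a b : ℕ) (h : a ≤ b) (F : ℕ → R) :
    ∑ i ∈ Icc a b, F i = F a + ∑ i ∈ Icc (a + 1) b, F i := by
  have he : Icc a b = insert a (Icc (a + 1) b) := by
    ext x; simp only [Finset.mem_Icc, Finset.mem_insert]; omega
  rw [he, Finset.sum_insert (by simp only [Finset.mem_Icc, not_and]; omega)]

lemma shift_sum (F : ℕ → R) (k a b : ℕ) :
    (X : R) ^ (2 * k) * ∑ i ∈ Icc a b, F i * X ^ (2 * i)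
      = ∑ i ∈ Icc (a + k) (b + k), F (i - k) * X ^ (2 * i) := by
  rw [Finset.mul_sum, ← Finset.map_add_right_Icc a b k, Finset.sum_map]
  apply Finset.sum_congr rfl
  intro i _
  simp only [addRightEmbedding_apply]
  rw [Nat.add_sub_cancel, show 2 * (i + k) = 2 * i + 2 * k from by ring, pow_add]
  ring

/-! ### Piece 1 -/

def g1 (m : ℕ) : R := ∑ i ∈ Icc 1 m, (i : R) * (X ^ (4 * i - 2) + X ^ (4 * i - 4))
def d1 (m : ℕ) : R := (m : R) * (X ^ (4 * m - 2) + X ^ (4 * m - 4))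
def c1 (m : ℕ) : R := d1 m - X ^ 4 * d1 (m - 1)

lemma d1_zero : d1 0 = 0 := by simp [d1]

lemma g1_succ (k : ℕ) : g1 (k + 1) = g1 k + d1 (k + 1) := by
  rw [g1, g1, d1]
  have he : Icc 1 (k + 1) = insert (k + 1) (Icc 1 k) := by
    ext x; simp only [Finset.mem_Icc, Finset.mem_insert]; omega
  rw [he, Finset.sum_insert (by simp only [Finset.mem_Icc, not_and]; omega), add_comm]

def F1 (m n : ℕ) : R := if 1 ≤ m ∧ m ≤ n then g1 m else 0
def A1 (m n : ℕ) : R := if 1 ≤ m ∧ m = n then g1 m else 0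
def B1 (m n : ℕ) : R := if 1 ≤ m ∧ m = n then d1 m else 0
def C1 (m n : ℕ) : R := if 1 ≤ m ∧ m = n then c1 m else 0

lemma p1a : ∀ m n : ℕ,
    F1 m n - (if 0 ≤ m ∧ 1 ≤ n then (1 : R) * F1 (m - 0) (n - 1) else 0) = A1 m n := by
  intro m n
  simp only [F1, A1, Nat.sub_zero, Nat.zero_le, true_and, one_mul]
  split_ifs <;> first | (exfalso; omega) | ring

lemma p1b : ∀ m n : ℕ,
    A1 m n - (if 1 ≤ m ∧ 1 ≤ n then (1 : R) * A1 (m - 1) (n - 1) else 0) = B1 m n := by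
  intro m n
  simp only [A1, B1, one_mul]
  by_cases h : 1 ≤ m ∧ m = n
  · obtain ⟨hm, rfl⟩ := h
    by_cases h2 : 1 ≤ m - 1
    · simp only [hm, h2, true_and, and_true, and_self, if_true, eq_self_iff_true]
      obtain ⟨k, rfl⟩ : ∃ k, m = k + 1 := ⟨m - 1, by omega⟩
      rw [Nat.add_sub_cancel, g1_succ]
      ring
    · simp only [hm, h2, true_and, and_true, and_self, if_true, eq_self_iff_true,
        false_and, if_false, sub_zero]
      have hm1 : m = 1 := by omega
      subst hm1
      rw [g1, d1, Finset.Icc_self, Finset.sum_singleton]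
  · rw [if_neg h, if_neg h]
    split_ifs <;> first | (exfalso; omega) | ring

lemma p1c : ∀ m n : ℕ,
    B1 m n - (if 1 ≤ m ∧ 1 ≤ n then (X : R) ^ 4 * B1 (m - 1) (n - 1) else 0) = C1 m n := by
  intro m n
  simp only [B1, C1]
  by_cases h : 1 ≤ m ∧ m = n
  · obtain ⟨hm, rfl⟩ := h
    by_cases h2 : 1 ≤ m - 1
    · simp only [hm, h2, true_and, and_true, and_self, if_true, eq_self_iff_true]
      rw [c1]
    · simp only [hm, h2, true_and, and_true, and_self, if_true, eq_self_iff_true,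
        false_and, if_false, mul_zero, sub_zero]
      have hm1 : m = 1 := by omega
      subst hm1
      rw [c1]
      norm_num [d1_zero]
  · rw [if_neg h, if_neg h]
    split_ifs <;> first | (exfalso; omega) | ring

lemma p1d : ∀ m n : ℕ,
    C1 m n - (if 1 ≤ m ∧ 1 ≤ n then (X : R) ^ 4 * C1 (m - 1) (n - 1) else 0)
      = if m = 1 ∧ n = 1 then X ^ 2 + 1 else 0 := by
  intro m n
  simp only [C1]
  by_cases h : 1 ≤ m ∧ m = n
  · obtain ⟨hm, rfl⟩ := h
    by_cases h2 : 1 ≤ m - 1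
    · simp only [hm, h2, true_and, and_true, and_self, if_true, eq_self_iff_true]
      rw [if_neg (show ¬m = 1 by omega)]
      obtain ⟨k, rfl⟩ : ∃ k, m = k + 2 := ⟨m - 2, by omega⟩
      rw [show k + 2 - 1 = k + 1 from by omega]
      rcases Nat.eq_zero_or_pos k with rfl | hk
      · simp only [c1, d1]
        norm_num [d1_zero]
        ring
      · obtain ⟨j, rfl⟩ : ∃ j, k = j + 1 := ⟨k - 1, by omega⟩
        simp only [c1, d1]
        rw [show j + 1 + 2 - 1 = j + 2 from by omega,
          show j + 1 + 1 - 1 = j + 1 from by omega,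
          show 4 * (j + 1 + 2) - 2 = 4 * j + 10 from by omega,
          show 4 * (j + 1 + 2) - 4 = 4 * j + 8 from by omega,
          show 4 * (j + 2) - 2 = 4 * j + 6 from by omega,
          show 4 * (j + 2) - 4 = 4 * j + 4 from by omega,
          show 4 * (j + 1) - 2 = 4 * j + 2 from by omega,
          show 4 * (j + 1) - 4 = 4 * j + 0 from by omega]
        push_cast
        ring
    · simp only [hm, h2, true_and, and_true, and_self, if_true, eq_self_iff_true,
        false_and, if_false, mul_zero, sub_zero]
      have hm1 : m = 1 := by omega
      subst hm1
      rw [if_pos rfl, c1]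
      norm_num [d1_zero, d1]
  · rw [if_neg h, if_neg (by omega : ¬(m = 1 ∧ n = 1))]
    split_ifs <;> first | (exfalso; omega) | ring

/-! ### Piece 2 -/

def F2 (m n : ℕ) : R :=
  if 1 ≤ m ∧ m ≤ n then ∑ i ∈ Icc (2 * m) (m + n - 1), ((2 * m + 1 : ℕ) : R) * X ^ (2 * i)
  else 0
def A2 (m n : ℕ) : R :=
  if 1 ≤ m ∧ m + 1 ≤ n then ((2 * m + 1 : ℕ) : R) * X ^ (4 * m) else 0
def B2 (m n : ℕ) : R :=
  if 1 ≤ m ∧ n = m + 1 then ((2 * m + 1 : ℕ) : R) * X ^ (4 * m) else 0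
def C2 (m n : ℕ) : R :=
  if 1 ≤ m ∧ n = m + 1 then (if m = 1 then 3 * (X : R) ^ 4 else 2 * X ^ (4 * m)) else 0

lemma p2a : ∀ m n : ℕ,
    F2 m n - (if 0 ≤ m ∧ 1 ≤ n then (X : R) ^ 2 * F2 (m - 0) (n - 1) else 0) = A2 m n := by
  intro m n
  simp only [F2, A2, Nat.sub_zero, Nat.zero_le, true_and]
  by_cases h : 1 ≤ m ∧ m ≤ n
  · obtain ⟨hm, hmn⟩ := h
    have h1n : 1 ≤ n := by omega
    by_cases h2 : m + 1 ≤ n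
    · have h3 : m ≤ n - 1 := by omega
      simp only [hm, hmn, h1n, h2, h3, true_and, and_self, and_true, if_true]
      rw [show m + (n - 1) - 1 = m + n - 2 from by omega]
      have hs := shift_sum (fun _ => ((2 * m + 1 : ℕ) : R)) 1 (2 * m) (m + n - 2)
      simp only [show m + n - 2 + 1 = m + n - 1 from by omega,
        show 2 * 1 = 2 from rfl] at hs
      rw [hs, Icc_bot (2 * m) (m + n - 1) (by omega)]
      rw [show 2 * (2 * m) = 4 * m from by ring]
      ring
    · have h3 : ¬(m ≤ n - 1) := by omega
      simp only [hm, hmn, h1n, h2, h3, true_and, and_self, and_true, if_true,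
        and_false, false_and, if_false]
      rw [show Icc (2 * m) (m + n - 1) = ∅ from Finset.Icc_eq_empty (by omega),
        Finset.sum_empty]
      ring
  · rw [if_neg h, if_neg (by omega : ¬(1 ≤ m ∧ m + 1 ≤ n))]
    split_ifs <;> first | (exfalso; omega) | ring

lemma p2b : ∀ m n : ℕ,
    A2 m n - (if 0 ≤ m ∧ 1 ≤ n then (1 : R) * A2 (m - 0) (n - 1) else 0) = B2 m n := by
  intro m n
  simp only [A2, B2, Nat.sub_zero, Nat.zero_le, true_and, one_mul]
  split_ifs <;> first | (exfalso; omega) | ring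

lemma p2c : ∀ m n : ℕ,
    B2 m n - (if 1 ≤ m ∧ 1 ≤ n then (X : R) ^ 4 * B2 (m - 1) (n - 1) else 0) = C2 m n := by
  intro m n
  simp only [B2, C2]
  by_cases h : 1 ≤ m ∧ n = m + 1
  · obtain ⟨hm, rfl⟩ := h
    simp only [Nat.add_sub_cancel]
    by_cases h2 : 1 ≤ m - 1
    · have h3 : m = m - 1 + 1 := by omega
      rw [if_pos (⟨h2, h3⟩ : 1 ≤ m - 1 ∧ m = m - 1 + 1)]
      simp only [hm, (show 1 ≤ m + 1 from by omega), true_and, and_true, and_self, if_true]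
      rw [if_neg (show ¬ m = 1 by omega)]
      obtain ⟨k, rfl⟩ : ∃ k, m = k + 2 := ⟨m - 2, by omega⟩
      rw [show k + 2 - 1 = k + 1 from by omega,
        show 4 * (k + 2) = 4 * k + 8 from by omega,
        show 4 * (k + 1) = 4 * k + 4 from by omega]
      push_cast
      ring
    · have hm1 : m = 1 := by omega
      subst hm1
      norm_num
  · rw [if_neg h, if_neg h]
    split_ifs <;> first | (exfalso; omega) | ring

lemma p2d : ∀ m n : ℕ,
    C2 m n - (if 1 ≤ m ∧ 1 ≤ n then (X : R) ^ 4 * C2 (m - 1) (n - 1) else 0)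
      = if m = 1 ∧ n = 2 then 3 * X ^ 4
        else if m = 2 ∧ n = 3 then -(X ^ 8) else 0 := by
  intro m n
  simp only [C2]
  by_cases h : 1 ≤ m ∧ n = m + 1
  · obtain ⟨hm, rfl⟩ := h
    match m, hm with
    | 1, _ => norm_num
    | 2, _ => norm_num; ring
    | (k+3), _ =>
      rw [show k + 3 - 1 = k + 2 from by omega, show k + 3 + 1 - 1 = k + 3 from by omega]
      simp only [(show 1 ≤ k + 3 from by omega), (show 1 ≤ k + 3 + 1 from by omega),
        true_and, and_true, and_self, if_true]
      rw [if_pos (show 1 ≤ k + 2 by omega),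
        if_neg (show ¬ k + 3 = 1 by omega), if_neg (show ¬ k + 2 = 1 by omega),
        if_neg (by omega : ¬(k + 3 = 1 ∧ k + 3 + 1 = 2)),
        if_neg (by omega : ¬(k + 3 = 2 ∧ k + 3 + 1 = 3)),
        show 4 * (k + 3) = 4 * k + 12 from by omega,
        show 4 * (k + 2) = 4 * k + 8 from by omega]
      ring
  · rw [if_neg h, if_neg (by omega : ¬(m = 1 ∧ n = 2)), if_neg (by omega : ¬(m = 2 ∧ n = 3))]
    split_ifs <;> first | (exfalso; omega) | ring

/-! ### Piece 3 -/

def F3 (m n : ℕ) : R :=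
  if 1 ≤ m ∧ m ≤ n then
    ∑ i ∈ Icc (m + n) (2 * m + n - 1), ((4 * (2 * m + n - i) : ℕ) : R) * X ^ (2 * i)
  else 0
def A3 (m n : ℕ) : R :=
  if 1 ≤ m ∧ m = n then
    ∑ i ∈ Icc (2 * m) (3 * m - 1), ((4 * (3 * m - i) : ℕ) : R) * X ^ (2 * i)
  else 0
def B3 (m n : ℕ) : R := if 1 ≤ m ∧ m = n then ((4 * m : ℕ) : R) * X ^ (4 * m) else 0
def C3 (m n : ℕ) : R := if 1 ≤ m ∧ m = n then 4 * (X : R) ^ (4 * m) else 0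

lemma p3a : ∀ m n : ℕ,
    F3 m n - (if 0 ≤ m ∧ 1 ≤ n then (X : R) ^ 2 * F3 (m - 0) (n - 1) else 0) = A3 m n := by
  intro m n
  simp only [F3, A3, Nat.sub_zero, Nat.zero_le, true_and]
  by_cases h : 1 ≤ m ∧ m ≤ n
  · obtain ⟨hm, hmn⟩ := h
    have h1n : 1 ≤ n := by omega
    by_cases h2 : m + 1 ≤ n
    · have h3 : m ≤ n - 1 := by omega
      simp only [hm, hmn, h1n, h2, h3, true_and, and_self, and_true, if_true]
      rw [if_neg (show ¬m = n by omega)]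
      rw [show m + (n - 1) = m + n - 1 from by omega,
        show 2 * m + (n - 1) = 2 * m + n - 1 from by omega,
        show 2 * m + n - 1 - 1 = 2 * m + n - 2 from by omega]
      have hs := shift_sum (fun j => ((4 * (2 * m + n - 1 - j) : ℕ) : R)) 1
        (m + n - 1) (2 * m + n - 2)
      simp only [show 2 * 1 = 2 from rfl, show m + n - 1 + 1 = m + n from by omega,
        show 2 * m + n - 2 + 1 = 2 * m + n - 1 from by omega] at hs
      rw [hs, sub_eq_zero]
      apply Finset.sum_congr rfl
      intro i hi
      have hi' := Finset.mem_Icc.mp hi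
      have h4 : 4 * (2 * m + n - i) = 4 * (2 * m + n - 1 - (i - 1)) := by omega
      rw [h4]
    · have hnm : m = n := by omega
      subst hnm
      rw [if_neg (by omega : ¬(1 ≤ m ∧ m ≤ m - 1))]
      simp only [hm, le_refl, true_and, and_self, if_true, mul_zero, sub_zero, ite_self]
      rw [show m + m = 2 * m from by omega, show 2 * m + m = 3 * m from by omega]
  · rw [if_neg h, if_neg (by omega : ¬(1 ≤ m ∧ m = n))]
    split_ifs <;> first | (exfalso; omega) | ring

lemma p3b : ∀ m n : ℕ,
    A3 m n - (if 1 ≤ m ∧ 1 ≤ n then (X : R) ^ 6 * A3 (m - 1) (n - 1) else 0) = B3 m n := by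
  intro m n
  simp only [A3, B3]
  by_cases h : 1 ≤ m ∧ m = n
  · obtain ⟨hm, rfl⟩ := h
    by_cases h2 : 1 ≤ m - 1
    · simp only [hm, h2, true_and, and_true, and_self, if_true, eq_self_iff_true]
      obtain ⟨k, rfl⟩ : ∃ k, m = k + 2 := ⟨m - 2, by omega⟩
      rw [show k + 2 - 1 = k + 1 from by omega,
        show 3 * (k + 2) = 3 * k + 6 from by omega,
        show 2 * (k + 2) = 2 * k + 4 from by omega,
        show 3 * k + 6 - 1 = 3 * k + 5 from by omega,
        show 3 * (k + 1) = 3 * k + 3 from by omega,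
        show 2 * (k + 1) = 2 * k + 2 from by omega,
        show 3 * k + 3 - 1 = 3 * k + 2 from by omega]
      have hs := shift_sum (fun j => ((4 * (3 * k + 3 - j) : ℕ) : R)) 3
        (2 * k + 2) (3 * k + 2)
      simp only [show 2 * 3 = 6 from rfl, show 2 * k + 2 + 3 = 2 * k + 5 from by omega,
        show 3 * k + 2 + 3 = 3 * k + 5 from by omega] at hs
      rw [hs, Icc_bot (2 * k + 4) (3 * k + 5) (by omega),
        show 2 * k + 4 + 1 = 2 * k + 5 from by omega]
      have hsum : (∑ i ∈ Icc (2 * k + 5) (3 * k + 5),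
            ((4 * (3 * k + 6 - i) : ℕ) : R) * X ^ (2 * i))
          = ∑ i ∈ Icc (2 * k + 5) (3 * k + 5),
            ((4 * (3 * k + 3 - (i - 3)) : ℕ) : R) * X ^ (2 * i) := by
        apply Finset.sum_congr rfl
        intro i hi
        have hi' := Finset.mem_Icc.mp hi
        have h4 : 4 * (3 * k + 6 - i) = 4 * (3 * k + 3 - (i - 3)) := by omega
        rw [h4]
      rw [hsum, show 4 * (3 * k + 6 - (2 * k + 4)) = 4 * (k + 2) from by omega,
        show 2 * (2 * k + 4) = 4 * (k + 2) from by omega]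
      ring
    · have hm1 : m = 1 := by omega
      subst hm1
      simp only [hm, true_and, and_self, if_true, eq_self_iff_true,
        (show ¬(1 ≤ 1 - 1 ∧ 1 - 1 = 1 - 1) from fun hh => by omega), if_false,
        mul_zero, sub_zero]
      norm_num [Finset.Icc_self]
  · rw [if_neg h, if_neg h]
    split_ifs <;> first | (exfalso; omega) | ring

lemma p3c : ∀ m n : ℕ,
    B3 m n - (if 1 ≤ m ∧ 1 ≤ n then (X : R) ^ 4 * B3 (m - 1) (n - 1) else 0) = C3 m n := by
  intro m n
  simp only [B3, C3]
  by_cases h : 1 ≤ m ∧ m = n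
  · obtain ⟨hm, rfl⟩ := h
    by_cases h2 : 1 ≤ m - 1
    · simp only [hm, h2, true_and, and_true, and_self, if_true, eq_self_iff_true]
      obtain ⟨k, rfl⟩ : ∃ k, m = k + 2 := ⟨m - 2, by omega⟩
      rw [show k + 2 - 1 = k + 1 from by omega,
        show 4 * (k + 2) = 4 * k + 8 from by omega,
        show 4 * (k + 1) = 4 * k + 4 from by omega]
      push_cast
      ring
    · have hm1 : m = 1 := by omega
      subst hm1
      simp only [hm, true_and, and_self, if_true,
        (show ¬(1 ≤ 1 - 1 ∧ 1 - 1 = 1 - 1) from fun hh => by omega), if_false,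
        mul_zero, sub_zero]
      norm_num
  · rw [if_neg h, if_neg h]
    split_ifs <;> first | (exfalso; omega) | ring

lemma p3d : ∀ m n : ℕ,
    C3 m n - (if 1 ≤ m ∧ 1 ≤ n then (X : R) ^ 4 * C3 (m - 1) (n - 1) else 0)
      = if m = 1 ∧ n = 1 then 4 * X ^ 4 else 0 := by
  intro m n
  simp only [C3]
  by_cases h : 1 ≤ m ∧ m = n
  · obtain ⟨hm, rfl⟩ := h
    by_cases h2 : 1 ≤ m - 1
    · simp only [hm, h2, true_and, and_true, and_self, if_true, eq_self_iff_true]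
      rw [if_neg (show ¬m = 1 by omega)]
      obtain ⟨k, rfl⟩ : ∃ k, m = k + 2 := ⟨m - 2, by omega⟩
      rw [show k + 2 - 1 = k + 1 from by omega,
        show 4 * (k + 2) = 4 + 4 * (k + 1) from by omega, pow_add]
      ring
    · have hm1 : m = 1 := by omega
      subst hm1
      simp only [hm, true_and, and_self, if_true,
        (show ¬(1 ≤ 1 - 1 ∧ 1 - 1 = 1 - 1) from fun hh => by omega), if_false,
        mul_zero, sub_zero]
      norm_num
  · rw [if_neg h, if_neg (by omega : ¬(m = 1 ∧ n = 1))]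
    split_ifs <;> first | (exfalso; omega) | ring

/-! ### Piece 4 -/

def F4 (m n : ℕ) : R := if 1 ≤ m ∧ m ≤ n then X ^ (4 * m + 2 * n) else 0
def A4 (m n : ℕ) : R := if 1 ≤ m ∧ m = n then X ^ (6 * m) else 0

lemma p4a : ∀ m n : ℕ,
    F4 m n - (if 0 ≤ m ∧ 1 ≤ n then (X : R) ^ 2 * F4 (m - 0) (n - 1) else 0) = A4 m n := by
  intro m n
  simp only [F4, A4, Nat.sub_zero, Nat.zero_le, true_and]
  by_cases h : 1 ≤ m ∧ m ≤ n
  · obtain ⟨hm, hmn⟩ := h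
    rw [if_pos ⟨hm, hmn⟩, if_pos (by omega : 1 ≤ n)]
    by_cases h2 : m ≤ n - 1
    · rw [if_pos ⟨hm, h2⟩, if_neg (by omega : ¬(1 ≤ m ∧ m = n))]
      rw [show 4 * m + 2 * n = 2 + (4 * m + 2 * (n - 1)) from by omega, pow_add]
      ring
    · rw [if_neg (by omega : ¬(1 ≤ m ∧ m ≤ n - 1)),
        if_pos (⟨hm, by omega⟩ : 1 ≤ m ∧ m = n)]
      rw [show 4 * m + 2 * n = 6 * m from by omega]
      ring
  · rw [if_neg h, if_neg (by omega : ¬(1 ≤ m ∧ m = n))]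
    split_ifs <;> first | (exfalso; omega) | ring

lemma p4b : ∀ m n : ℕ,
    A4 m n - (if 1 ≤ m ∧ 1 ≤ n then (X : R) ^ 6 * A4 (m - 1) (n - 1) else 0)
      = if m = 1 ∧ n = 1 then X ^ 6 else 0 := by
  intro m n
  simp only [A4]
  by_cases h : 1 ≤ m ∧ m = n
  · obtain ⟨hm, rfl⟩ := h
    rw [if_pos ⟨hm, rfl⟩, if_pos ⟨hm, hm⟩]
    by_cases h2 : 1 ≤ m - 1
    · rw [if_pos ⟨h2, rfl⟩, if_neg (by omega : ¬(m = 1 ∧ m = 1))]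
      rw [show 6 * m = 6 + 6 * (m - 1) from by omega, pow_add]
      ring
    · rw [if_neg (fun hh => h2 hh.1), if_pos (⟨by omega, by omega⟩ : m = 1 ∧ m = 1),
        show 6 * m = 6 from by omega]
      ring
  · rw [if_neg h, if_neg (by omega : ¬(m = 1 ∧ n = 1))]
    split_ifs <;> first | (exfalso; omega) | ring

/-! ### Series-level steps -/

lemma s1a : (1 - mon 0 1 1) * mk2 F1 = mk2 A1 := by
  rw [one_sub_mon_mul]; exact mk2_congr p1a
lemma s1b : (1 - mon 1 1 1) * mk2 A1 = mk2 B1 := by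
  rw [one_sub_mon_mul]; exact mk2_congr p1b
lemma s1c : (1 - mon 1 1 (X ^ 4)) * mk2 B1 = mk2 C1 := by
  rw [one_sub_mon_mul]; exact mk2_congr p1c
lemma s1d : (1 - mon 1 1 (X ^ 4)) * mk2 C1 = mon 1 1 (X ^ 2 + 1) := by
  rw [one_sub_mon_mul]; exact mk2_eq_mon 1 1 _ _ p1d

lemma s2a : (1 - mon 0 1 (X ^ 2)) * mk2 F2 = mk2 A2 := by
  rw [one_sub_mon_mul]; exact mk2_congr p2a
lemma s2b : (1 - mon 0 1 1) * mk2 A2 = mk2 B2 := by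
  rw [one_sub_mon_mul]; exact mk2_congr p2b
lemma s2c : (1 - mon 1 1 (X ^ 4)) * mk2 B2 = mk2 C2 := by
  rw [one_sub_mon_mul]; exact mk2_congr p2c
lemma s2d : (1 - mon 1 1 (X ^ 4)) * mk2 C2 = mon 1 2 (3 * X ^ 4) + mon 2 3 (-(X ^ 8)) := by
  rw [one_sub_mon_mul]
  exact mk2_eq_mon2 1 2 2 3 _ _ _ (by omega) p2d

lemma s3a : (1 - mon 0 1 (X ^ 2)) * mk2 F3 = mk2 A3 := by
  rw [one_sub_mon_mul]; exact mk2_congr p3a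
lemma s3b : (1 - mon 1 1 (X ^ 6)) * mk2 A3 = mk2 B3 := by
  rw [one_sub_mon_mul]; exact mk2_congr p3b
lemma s3c : (1 - mon 1 1 (X ^ 4)) * mk2 B3 = mk2 C3 := by
  rw [one_sub_mon_mul]; exact mk2_congr p3c
lemma s3d : (1 - mon 1 1 (X ^ 4)) * mk2 C3 = mon 1 1 (4 * X ^ 4) := by
  rw [one_sub_mon_mul]; exact mk2_eq_mon 1 1 _ _ p3d

lemma s4a : (1 - mon 0 1 (X ^ 2)) * mk2 F4 = mk2 A4 := by
  rw [one_sub_mon_mul]; exact mk2_congr p4a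
lemma s4b : (1 - mon 1 1 (X ^ 6)) * mk2 A4 = mon 1 1 (X ^ 6) := by
  rw [one_sub_mon_mul]; exact mk2_eq_mon 1 1 _ _ p4b

/-! ### Denominator times series equals numerator -/

lemma hD1 : (1 - gl3T₂) * (1 - gl3T₁ * gl3T₂) *
      (1 - gl3C (X ^ 4) * gl3T₁ * gl3T₂) ^ 2 * mk2 F1
    = gl3C (X ^ 2 + 1) * gl3T₁ * gl3T₂ := by
  rw [mCT12, mCT12, mT12, mT2]
  rw [show (1 - mon 0 1 1) * (1 - mon 1 1 1) * (1 - mon 1 1 (X ^ 4)) ^ 2 * mk2 F1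
      = (1 - mon 1 1 (X ^ 4)) * ((1 - mon 1 1 (X ^ 4)) *
          ((1 - mon 1 1 1) * ((1 - mon 0 1 1) * mk2 F1))) from by ring,
    s1a, s1b, s1c, s1d]

lemma hD2 : (1 - gl3T₂) * (1 - gl3C (X ^ 2) * gl3T₂) *
      (1 - gl3C (X ^ 4) * gl3T₁ * gl3T₂) ^ 2 * mk2 F2
    = gl3C (X ^ 4) * gl3T₁ * gl3T₂ ^ 2 * (3 - gl3C (X ^ 4) * gl3T₁ * gl3T₂) := by
  rw [mCT12, mCT2, mC, mT1, mT2, num3]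
  rw [show (1 - mon 0 1 1) * (1 - mon 0 1 (X ^ 2)) * (1 - mon 1 1 (X ^ 4)) ^ 2 * mk2 F2
      = (1 - mon 1 1 (X ^ 4)) * ((1 - mon 1 1 (X ^ 4)) *
          ((1 - mon 0 1 1) * ((1 - mon 0 1 (X ^ 2)) * mk2 F2))) from by ring,
    s2a, s2b, s2c, s2d]
  rw [pow_two, mul_sub]
  simp only [mon_mul]
  rw [sub_eq_add_neg, ← mon_neg]
  norm_num
  congr 1
  · ring_nf
  · ring_nf

lemma hD3 : (1 - gl3C (X ^ 2) * gl3T₂) * (1 - gl3C (X ^ 4) * gl3T₁ * gl3T₂) ^ 2 *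
      (1 - gl3C (X ^ 6) * gl3T₁ * gl3T₂) * mk2 F3
    = 4 * (gl3C (X ^ 4) * gl3T₁ * gl3T₂) := by
  rw [mCT12, mCT12, mCT2, num4]
  rw [show (1 - mon 0 1 (X ^ 2)) * (1 - mon 1 1 (X ^ 4)) ^ 2 *
        (1 - mon 1 1 (X ^ 6)) * mk2 F3
      = (1 - mon 1 1 (X ^ 4)) * ((1 - mon 1 1 (X ^ 4)) *
          ((1 - mon 1 1 (X ^ 6)) * ((1 - mon 0 1 (X ^ 2)) * mk2 F3))) from by ring,
    s3a, s3b, s3c, s3d, mon_mul]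

lemma hD4 : (1 - gl3C (X ^ 2) * gl3T₂) * (1 - gl3C (X ^ 6) * gl3T₁ * gl3T₂) * mk2 F4
    = gl3C (X ^ 6) * gl3T₁ * gl3T₂ := by
  rw [mCT12, mCT2]
  rw [show (1 - mon 0 1 (X ^ 2)) * (1 - mon 1 1 (X ^ 6)) * mk2 F4
      = (1 - mon 1 1 (X ^ 6)) * ((1 - mon 0 1 (X ^ 2)) * mk2 F4) from by ring,
    s4a, s4b]

lemma hc1 : MvPowerSeries.constantCoeff (σ := Fin 2) (R := R)
    ((1 - gl3T₂) * (1 - gl3T₁ * gl3T₂) *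
      (1 - gl3C (X ^ 4) * gl3T₁ * gl3T₂) ^ 2) = 1 := by
  simp [gl3C, gl3T₁, gl3T₂]

lemma hc2 : MvPowerSeries.constantCoeff (σ := Fin 2) (R := R)
    ((1 - gl3T₂) * (1 - gl3C (X ^ 2) * gl3T₂) *
      (1 - gl3C (X ^ 4) * gl3T₁ * gl3T₂) ^ 2) = 1 := by
  simp [gl3C, gl3T₁, gl3T₂]

lemma hc3 : MvPowerSeries.constantCoeff (σ := Fin 2) (R := R)
    ((1 - gl3C (X ^ 2) * gl3T₂) * (1 - gl3C (X ^ 4) * gl3T₁ * gl3T₂) ^ 2 *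
      (1 - gl3C (X ^ 6) * gl3T₁ * gl3T₂)) = 1 := by
  simp [gl3C, gl3T₁, gl3T₂]

lemma hc4 : MvPowerSeries.constantCoeff (σ := Fin 2) (R := R)
    ((1 - gl3C (X ^ 2) * gl3T₂) * (1 - gl3C (X ^ 6) * gl3T₁ * gl3T₂)) = 1 := by
  simp [gl3C, gl3T₁, gl3T₂]

end
end GL3Aux

open GL3Aux in
/-- **Rationality of the generating series for `GL₃`, region `n₁ ≤ n₂`.**
In `ℤ[t][[T₁,T₂]]` one has
`∑_{n₂ ≥ 1} ∑_{1 ≤ n₁ ≤ n₂} P_{(n₁,n₂)}(t) T₁^{n₁} T₂^{n₂}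
  = (t²+1)T₁T₂/[(1−T₂)(1−T₁T₂)(1−t⁴T₁T₂)²]
  + t⁴T₁T₂²(3−t⁴T₁T₂)/[(1−T₂)(1−t²T₂)(1−t⁴T₁T₂)²]
  + 4t⁴T₁T₂/[(1−t²T₂)(1−t⁴T₁T₂)²(1−t⁶T₁T₂)]
  + t⁶T₁T₂/[(1−t²T₂)(1−t⁶T₁T₂)]`,
stated coefficientwise (the inverses being `MvPowerSeries.invOfUnit _ 1`, genuine inverses
since each denominator has constant coefficient `1`). -/
theorem gl3_generating_series_ordered :
    ∀ n₁ n₂ : ℕ,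
      MvPowerSeries.coeff (R := Polynomial ℤ) (Finsupp.single (0 : Fin 2) n₁ + Finsupp.single 1 n₂)
        (gl3C (Polynomial.X ^ 2 + 1) * gl3T₁ * gl3T₂ *
            MvPowerSeries.invOfUnit
              ((1 - gl3T₂) * (1 - gl3T₁ * gl3T₂) *
                (1 - gl3C (Polynomial.X ^ 4) * gl3T₁ * gl3T₂) ^ 2) 1
          + gl3C (Polynomial.X ^ 4) * gl3T₁ * gl3T₂ ^ 2 *
              (3 - gl3C (Polynomial.X ^ 4) * gl3T₁ * gl3T₂) *
            MvPowerSeries.invOfUnit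
              ((1 - gl3T₂) * (1 - gl3C (Polynomial.X ^ 2) * gl3T₂) *
                (1 - gl3C (Polynomial.X ^ 4) * gl3T₁ * gl3T₂) ^ 2) 1
          + 4 * (gl3C (Polynomial.X ^ 4) * gl3T₁ * gl3T₂) *
            MvPowerSeries.invOfUnit
              ((1 - gl3C (Polynomial.X ^ 2) * gl3T₂) *
                (1 - gl3C (Polynomial.X ^ 4) * gl3T₁ * gl3T₂) ^ 2 *
                (1 - gl3C (Polynomial.X ^ 6) * gl3T₁ * gl3T₂)) 1
          + gl3C (Polynomial.X ^ 6) * gl3T₁ * gl3T₂ *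
            MvPowerSeries.invOfUnit
              ((1 - gl3C (Polynomial.X ^ 2) * gl3T₂) *
                (1 - gl3C (Polynomial.X ^ 6) * gl3T₁ * gl3T₂)) 1)
      = if 1 ≤ n₁ ∧ n₁ ≤ n₂ then gl3PoincarePoly n₁ n₂ else 0 := by
  intro n₁ n₂
  rw [eq_num_mul_inv _ _ _ hc1 hD1, eq_num_mul_inv _ _ _ hc2 hD2,
    eq_num_mul_inv _ _ _ hc3 hD3, eq_num_mul_inv _ _ _ hc4 hD4]
  rw [map_add, map_add, map_add, coeff_mk2, coeff_mk2, coeff_mk2, coeff_mk2,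
    app0, app1]
  simp only [F1, F2, F3, F4, g1, gl3PoincarePoly]
  split_ifs with h
  · rfl
  · simp
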